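/- Let T = (S, Σ, κ) be a stochastic transition system whose state space S is countable and equipped with the discrete σ-algebra (a countable Markov chain). If there exists a finite attractor A ⊆ S for T, then T is decisive with respect to every set B ⊆ S. -/

import Mathlib

open MeasureTheory ProbabilityTheory Filter Set ENNReal

namespace STS

variable {S : Type*} [MeasurableSpace S]

/-- The finite-dimensional distributions of the Markov chain with initial distribution `μ`
and transition kernel `κ`: `finDist κ μ n` is the joint law of the first `n+1` states. -/
noncomputable def finDist (κ : Kernel S S) (μ : Measure S) : (n : ℕ) → Measure (Fin (n + 1) → S)
  | 0 => μ.map (fun s => fun _ => s)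
  | n + 1 => (finDist κ μ n).bind (fun x => (κ (x (Fin.last n))).map (Fin.snoc x))

/-- `P` assigns to each initial probability distribution `μ` the probability measure `Prob_μ`
on the space of runs `ℕ → S` (given by the Ionescu–Tulcea theorem), i.e. the unique probability
measure under which the coordinate process is a Markov chain with initial distribution `μ` and
transition kernel `κ`.  This is characterized by the finite-dimensional distributions. -/
def IsMarkovMeasureFamily (κ : Kernel S S) (P : Measure S → Measure (ℕ → S)) : Prop :=
  ∀ μ : Measure S, IsProbabilityMeasure μ →
    IsProbabilityMeasure (P μ) ∧
    ∀ n : ℕ, (P μ).map (fun ω (i : Fin (n + 1)) => ω i.1) = finDist κ μ n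

/-- `F B`: the set of runs that visit `B` at some point. -/
def FEv (B : Set S) : Set (ℕ → S) := {ω | ∃ k, ω k ∈ B}

/-- `F^{≤n} B`: the set of runs that visit `B` within `n` steps. -/
def FLe (n : ℕ) (B : Set S) : Set (ℕ → S) := {ω | ∃ k ≤ n, ω k ∈ B}

/-- `B' U B`: runs that stay in `B'` until a first visit to `B`. -/
def Until (B' B : Set S) : Set (ℕ → S) := {ω | ∃ k, ω k ∈ B ∧ ∀ j < k, ω j ∈ B'}

/-- `B' U^{≤n} B`: runs that stay in `B'` until a first visit to `B`, within `n` steps. -/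
def UntilLe (n : ℕ) (B' B : Set S) : Set (ℕ → S) :=
  {ω | ∃ k ≤ n, ω k ∈ B ∧ ∀ j < k, ω j ∈ B'}

/-- `G B`: runs that always stay in `B`. -/
def Glob (B : Set S) : Set (ℕ → S) := {ω | ∀ k, ω k ∈ B}

/-- `GF B`: runs that visit `B` infinitely often. -/
def GlobFEv (B : Set S) : Set (ℕ → S) := {ω | ∀ n : ℕ, ∃ k ≥ n, ω k ∈ B}

/-- The avoid-set `B̃` of `B`: states from which `B` is reached with probability `0`. -/
def avoidSet (P : Measure S → Measure (ℕ → S)) (B : Set S) : Set S :=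
  {s : S | P (Measure.dirac s) (FEv B) = 0}

/-- The STS is decisive w.r.t. `B`: from any initial distribution, almost surely either `B` or
its avoid-set `B̃` is eventually visited. -/
def Decisive (P : Measure S → Measure (ℕ → S)) (B : Set S) : Prop :=
  ∀ μ : Measure S, IsProbabilityMeasure μ → P μ (FEv B ∪ FEv (avoidSet P B)) = 1

/-- `A` is an attractor: it is reached almost surely from any initial distribution. -/
def IsAttractor (P : Measure S → Measure (ℕ → S)) (A : Set S) : Prop :=
  ∀ μ : Measure S, IsProbabilityMeasure μ → P μ (FEv A) = 1

set_option linter.unusedSectionVars false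
set_option linter.unusedVariables false
section Foundation
variable {S : Type*} [Countable S] [MeasurableSpace S] [DiscreteMeasurableSpace S]
variable (κ : Kernel S S) [IsMarkovKernel κ]

/-- weight of the path `x 0, x 1, ..., x n` -/
noncomputable def wt (μ : Measure S) : ℕ → (ℕ → S) → ℝ≥0∞
  | 0, x => μ {x 0}
  | n+1, x => wt μ n x * κ (x n) {x (n+1)}

lemma wt_congr {μ : Measure S} {n : ℕ} {x y : ℕ → S} (h : ∀ i ≤ n, x i = y i) :
    wt κ μ n x = wt κ μ n y := by
  induction n with
  | zero => simp [wt, h 0 le_rfl]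
  | succ n ih =>
      simp only [wt]
      rw [ih (fun i hi => h i (hi.trans (Nat.le_succ n))), h n (Nat.le_succ n),
        h (n+1) le_rfl]

lemma wt_zero_of {μ : Measure S} {x : ℕ → S} (h : μ {x 0} = 0) (n : ℕ) :
    wt κ μ n x = 0 := by
  induction n with
  | zero => simpa [wt]
  | succ n ih => simp [wt, ih]

/-- projection to the first `n+1` coordinates -/
def proj (n : ℕ) : (ℕ → S) → (Fin (n+1) → S) := fun ω i => ω i.1

lemma measurable_proj (n : ℕ) : Measurable (proj (S := S) n) :=
  measurable_pi_lambda _ fun i => measurable_pi_apply _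

lemma finDist_singleton (μ : Measure S) (n : ℕ) (x : ℕ → S) :
    finDist κ μ n {fun i : Fin (n+1) => x i.1} = wt κ μ n x := by
  induction n with
  | zero =>
      rw [finDist, Measure.map_apply (measurable_of_countable _) .of_discrete]
      have : (fun s : S => fun _ : Fin 1 => s) ⁻¹' {fun i : Fin 1 => x i.1} = {x 0} := by
        ext s
        simp only [mem_preimage, mem_singleton_iff, funext_iff]
        constructor
        · intro h; exact h 0
        · intro h i; rw [Fin.fin_one_eq_zero i]; exact h
      rw [this]; rfl
  | succ n ih =>
      rw [finDist, Measure.bind_apply .of_discrete (measurable_of_countable _).aemeasurable]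
      have hint : ∀ y : Fin (n+1) → S,
          (κ (y (Fin.last n))).map (Fin.snoc y) {fun i : Fin (n+2) => x i.1}
          = Set.indicator {fun i : Fin (n+1) => x i.1}
              (fun _ => κ (x n) {x (n+1)}) y := by
        intro y
        rw [Measure.map_apply (measurable_of_countable _) .of_discrete]
        by_cases hy : y = fun i : Fin (n+1) => x i.1
        · subst hy
          have hpre : (@Fin.snoc (n+1) (fun _ => S) (fun i : Fin (n+1) => x i.1)) ⁻¹'
              {fun i : Fin (n+2) => x i.1} = {x (n+1)} := by
            ext u
            simp only [mem_preimage, mem_singleton_iff]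
            constructor
            · intro h
              have := congrFun h (Fin.last (n+1))
              simpa [Fin.snoc_last] using this
            · rintro rfl
              ext i
              rcases Fin.eq_castSucc_or_eq_last i with ⟨j, rfl⟩ | rfl
              · simp [Fin.snoc_castSucc]
              · simp [Fin.snoc_last]
          rw [hpre]
          have hlast : (fun i : Fin (n+1) => x i.1) (Fin.last n) = x n := rfl
          rw [hlast, Set.indicator_of_mem (mem_singleton _)]
        · have hpre : (@Fin.snoc (n+1) (fun _ => S) y) ⁻¹'
              {fun i : Fin (n+2) => x i.1} = ∅ := by
            ext u
            simp only [mem_preimage, mem_singleton_iff, mem_empty_iff_false, iff_false]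
            intro h
            apply hy
            ext i
            have := congrFun h i.castSucc
            simpa [Fin.snoc_castSucc] using this
          rw [hpre, Set.indicator_of_notMem (by simpa using hy)]
          simp
      simp_rw [hint]
      rw [lintegral_indicator_const .of_discrete, ih, wt, mul_comm]

variable (P : Measure S → Measure (ℕ → S))

lemma P_cyl (hP : IsMarkovMeasureFamily κ P) {μ : Measure S} (hμ : IsProbabilityMeasure μ) (n : ℕ)
    (C : Set (Fin (n+1) → S)) :
    P μ ((proj n) ⁻¹' C) = finDist κ μ n C := by
  rw [← (hP μ hμ).2 n]
  exact (Measure.map_apply (f := fun (ω : ℕ → S) (i : Fin (n+1)) => ω i.1) (measurable_proj n) .of_discrete).symm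

/-- cylinder given by a path prefix -/
def pc (k : ℕ) (x : ℕ → S) : Set (ℕ → S) := {ω | ∀ i ≤ k, ω i = x i}

lemma pc_eq (k : ℕ) (x : ℕ → S) :
    pc k x = (proj k) ⁻¹' {fun i : Fin (k+1) => x i.1} := by
  ext ω
  simp only [pc, mem_setOf_eq, mem_preimage, mem_singleton_iff, funext_iff, proj]
  constructor
  · intro h i; exact h i.1 (Nat.lt_succ_iff.mp i.2)
  · intro h i hi; exact h ⟨i, Nat.lt_succ_iff.mpr hi⟩

lemma measurableSet_pc (k : ℕ) (x : ℕ → S) : MeasurableSet (pc k x) := by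
  rw [pc_eq]; exact measurable_proj k .of_discrete

lemma P_pc (hP : IsMarkovMeasureFamily κ P) {μ : Measure S} (hμ : IsProbabilityMeasure μ) (k : ℕ) (x : ℕ → S) :
    P μ (pc k x) = wt κ μ k x := by
  rw [pc_eq, P_cyl κ P hP hμ, finDist_singleton]

end Foundation
section Markov
variable {S : Type*} [Countable S] [MeasurableSpace S] [DiscreteMeasurableSpace S]
variable (κ : Kernel S S) [IsMarkovKernel κ]
variable (P : Measure S → Measure (ℕ → S))

/-- the shift by `k` steps -/
def sh (k : ℕ) : (ℕ → S) → (ℕ → S) := fun ω i => ω (k + i)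

lemma measurable_sh (k : ℕ) : Measurable (sh (S := S) k) :=
  measurable_pi_lambda _ fun i => measurable_pi_apply _

/-- glue a path prefix of length `k+1` with a continuation sharing the state at time `k` -/
def glue (k : ℕ) (x y : ℕ → S) : ℕ → S := fun i => if i ≤ k then x i else y (i - k)

lemma wt_glue {μ : Measure S} {k : ℕ} {x y : ℕ → S} (hxy : y 0 = x k) (n : ℕ) :
    wt κ μ (k + n) (glue k x y) = wt κ μ k x * wt κ (Measure.dirac (x k)) n y := by
  induction n with
  | zero =>
      have h1 : wt κ μ (k + 0) (glue k x y) = wt κ μ k x :=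
        wt_congr κ (fun i hi => by simp [glue, show i ≤ k by omega])
      have h2 : wt κ (Measure.dirac (x k)) 0 y = 1 := by
        simp [wt, hxy, Measure.dirac_apply' _ (MeasurableSet.of_discrete)]
      rw [h1, h2, mul_one]
  | succ n ih =>
      have hg : ∀ m : ℕ, glue k x y (k + m) = y m := by
        intro m
        rcases Nat.eq_zero_or_pos m with rfl | hm
        · simp [glue, hxy]
        · have : ¬ k + m ≤ k := by omega
          simp [glue, this, Nat.add_sub_cancel_left]
      have : k + (n + 1) = (k + n) + 1 := by omega
      rw [this]
      show wt κ μ (k+n) (glue k x y) * κ (glue k x y (k+n)) {glue k x y (k+n+1)} = _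
      have : k + n + 1 = k + (n+1) := by omega
      rw [ih, this, hg n, hg (n+1), wt, mul_assoc]

lemma wt_dirac_zero {t : S} {y : ℕ → S} (h : y 0 ≠ t) (n : ℕ) :
    wt κ (Measure.dirac t) n y = 0 := by
  apply wt_zero_of
  rw [Measure.dirac_apply' _ MeasurableSet.of_discrete,
    Set.indicator_of_notMem (fun hm => h (Set.mem_singleton_iff.mp hm).symm)]

/-- The Markov property: conditioned on a path prefix, the shifted process is the chain
started at the last state of the prefix. -/
lemma markov (hP : IsMarkovMeasureFamily κ P) {μ : Measure S} (hμ : IsProbabilityMeasure μ)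
    (k : ℕ) (x : ℕ → S) {E : Set (ℕ → S)} (hE : MeasurableSet E) :
    P μ (pc k x ∩ (sh k) ⁻¹' E) = wt κ μ k x * P (Measure.dirac (x k)) E := by
  have hPμ : IsProbabilityMeasure (P μ) := (hP μ hμ).1
  have hPd : IsProbabilityMeasure (P (Measure.dirac (x k))) := (hP _ (by infer_instance)).1
  suffices h : ((P μ).restrict (pc k x)).map (sh k) = wt κ μ k x • P (Measure.dirac (x k)) by
    calc P μ (pc k x ∩ sh k ⁻¹' E) = ((P μ).restrict (pc k x)).map (sh k) E := by
          rw [Measure.map_apply (measurable_sh k) hE,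
            Measure.restrict_apply (hE.preimage (measurable_sh k)), inter_comm]
      _ = (wt κ μ k x • P (Measure.dirac (x k))) E := by rw [h]
      _ = wt κ μ k x * P (Measure.dirac (x k)) E := rfl
  -- both sides are finite measures agreeing on measurable cylinders
  haveI : IsFiniteMeasure (((P μ).restrict (pc k x)).map (sh k)) := by
    constructor
    rw [Measure.map_apply (measurable_sh k) MeasurableSet.univ]
    exact lt_of_le_of_lt (measure_mono (subset_univ _)) (measure_lt_top _ _)
  haveI : IsFiniteMeasure (wt κ μ k x • P (Measure.dirac (x k))) := by
    constructor
    have hle : wt κ μ k x ≤ 1 := by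
      rw [← P_pc κ P hP hμ k x]
      exact prob_le_one
    calc (wt κ μ k x • P (Measure.dirac (x k))) univ = wt κ μ k x * 1 := by
          simp [measure_univ]
      _ ≤ 1 := by simpa using hle
      _ < ⊤ := one_lt_top
  refine ext_of_generate_finite (measurableCylinders (fun _ : ℕ => S))
    generateFrom_measurableCylinders.symm isPiSystem_measurableCylinders (fun t ht => ?_) ?_
  swap
  · rw [Measure.map_apply (measurable_sh k) MeasurableSet.univ]
    simp only [preimage_univ, Measure.restrict_apply MeasurableSet.univ, univ_inter]
    rw [P_pc κ P hP hμ k x]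
    simp [measure_univ]
  -- reduce a measurable cylinder to a `proj n` cylinder
  obtain ⟨s, C, hC, rfl⟩ := (mem_measurableCylinders _).mp ht
  classical
  set n := s.sup id with hn
  have hsub : ∀ i ∈ s, i < n + 1 := fun i hi => Nat.lt_succ_of_le (Finset.le_sup (f := id) hi)
  have hcyl : cylinder s C = (proj (S := S) n) ⁻¹' {y | (fun i : s => y ⟨i.1, hsub i.1 i.2⟩) ∈ C} := by
    ext ω
    simp only [mem_cylinder, mem_preimage, mem_setOf_eq]
    rfl
  rw [hcyl]
  -- it suffices to prove equality for singletons in the countable discrete space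
  have key : ∀ v : Fin (n+1) → S,
      (((P μ).restrict (pc k x)).map (sh k)) ((proj (S := S) n) ⁻¹' {v})
      = (wt κ μ k x • P (Measure.dirac (x k))) ((proj (S := S) n) ⁻¹' {v}) := by
    intro v
    set y : ℕ → S := fun i => if h : i < n + 1 then v ⟨i, h⟩ else v 0 with hy
    have hvy : (proj (S := S) n) ⁻¹' {v} = pc n y := by
      ext ω
      simp only [mem_preimage, mem_singleton_iff, funext_iff, pc, mem_setOf_eq, proj]
      constructor
      · intro h i hi
        have := h ⟨i, Nat.lt_succ_of_le hi⟩
        simp [hy, Nat.lt_succ_of_le hi, Nat.not_lt.mpr hi, this]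
      · intro h i
        have := h i.1 (Nat.lt_succ_iff.mp i.2)
        simp only [hy] at this
        rw [dif_pos i.2] at this
        simpa using this
    rw [hvy, Measure.map_apply (measurable_sh k) (measurableSet_pc n y),
      Measure.restrict_apply ((measurableSet_pc n y).preimage (measurable_sh k))]
    have hshpre : sh k ⁻¹' pc n y = {ω : ℕ → S | ∀ j ≤ n, ω (k + j) = y j} := by
      ext ω; simp [sh, pc]
    by_cases h0 : y 0 = x k
    · have heq : sh k ⁻¹' pc n y ∩ pc k x = pc (k + n) (glue k x y) := by
        rw [hshpre]
        ext ω
        simp only [pc, mem_inter_iff, mem_setOf_eq, glue]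
        constructor
        · rintro ⟨h1, h2⟩ i hi
          by_cases hik : i ≤ k
          · simp [hik, h2 i hik]
          · rw [if_neg hik]
            have h3 := h1 (i - k) (by omega)
            rwa [show k + (i - k) = i by omega] at h3
        · intro h
          constructor
          · intro j hj
            have := h (k + j) (by omega)
            rcases Nat.eq_zero_or_pos j with rfl | hjpos
            · simpa [h0] using this
            · have hne : ¬ k + j ≤ k := by omega
              rw [if_neg hne] at this
              simpa [Nat.add_sub_cancel_left] using this
          · intro i hi
            have := h i (by omega)
            rwa [if_pos hi] at this
      rw [heq, P_pc κ P hP hμ, wt_glue κ h0, Measure.smul_apply, smul_eq_mul,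
        P_pc κ P hP (by infer_instance)]
    · have heq : sh k ⁻¹' pc n y ∩ pc k x = ∅ := by
        rw [hshpre]
        ext ω
        simp only [mem_inter_iff, mem_setOf_eq, pc, mem_empty_iff_false, iff_false, not_and]
        intro h1 h2
        exact h0 ((h1 0 (Nat.zero_le n)).symm.trans (by simpa using h2 k le_rfl))
      rw [heq, measure_empty, Measure.smul_apply, smul_eq_mul,
        P_pc κ P hP (by infer_instance), wt_dirac_zero κ h0, mul_zero]
  -- extend from singletons to all sets via countable additivity
  have hmap : (((P μ).restrict (pc k x)).map (sh k)).map (proj (S := S) n)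
      = (wt κ μ k x • P (Measure.dirac (x k))).map (proj (S := S) n) := by
    refine Measure.ext_iff_singleton.mpr fun v => ?_
    rw [Measure.map_apply (measurable_proj n) .of_discrete,
      Measure.map_apply (measurable_proj n) .of_discrete]
    exact key v
  rw [← Measure.map_apply (measurable_proj n) .of_discrete,
    ← Measure.map_apply (measurable_proj n) .of_discrete, hmap]

end Markov

section Master
variable {S : Type*} [Countable S] [MeasurableSpace S] [DiscreteMeasurableSpace S]
variable (κ : Kernel S S) [IsMarkovKernel κ]
variable (P : Measure S → Measure (ℕ → S))

/-- extend a finite path to an infinite one -/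
def ext' {k : ℕ} (x : Fin (k+1) → S) : ℕ → S := fun i => if h : i < k + 1 then x ⟨i, h⟩ else x 0

lemma ext'_proj {k : ℕ} (ω : ℕ → S) (i : ℕ) (hi : i ≤ k) : ext' (proj k ω) i = ω i := by
  simp [ext', Nat.lt_succ_of_le hi, proj]

/-- A family of "exact-time" prefix predicates: `Q k ω` depends only on `ω 0 .. ω k` and
holds for at most one `k`. -/
structure PrefixPred (S : Type*) where
  Q : ℕ → (ℕ → S) → Prop
  dep : ∀ k (ω ω' : ℕ → S), (∀ i ≤ k, ω i = ω' i) → Q k ω → Q k ω'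
  excl : ∀ (ω : ℕ → S) k k', Q k ω → Q k' ω → k = k'

lemma measurableSet_Q (q : PrefixPred S) (k : ℕ) : MeasurableSet {ω : ℕ → S | q.Q k ω} := by
  have : {ω : ℕ → S | q.Q k ω} = (proj k) ⁻¹' {y : Fin (k+1) → S | q.Q k (ext' y)} := by
    ext ω
    simp only [mem_setOf_eq, mem_preimage]
    constructor
    · intro h; exact q.dep k ω _ (fun i hi => (ext'_proj ω i hi).symm) h
    · intro h; exact q.dep k _ ω (fun i hi => ext'_proj ω i hi) h
  rw [this]
  exact measurable_proj k .of_discrete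

lemma measurableSet_QE (q : PrefixPred S) {E : Set (ℕ → S)} (hE : MeasurableSet E) :
    MeasurableSet {ω : ℕ → S | ∃ k, q.Q k ω ∧ sh k ω ∈ E} := by
  have : {ω : ℕ → S | ∃ k, q.Q k ω ∧ sh k ω ∈ E}
      = ⋃ k, ({ω : ℕ → S | q.Q k ω} ∩ (sh k) ⁻¹' E) := by
    ext ω; simp [mem_iUnion, mem_setOf_eq]
  rw [this]
  exact MeasurableSet.iUnion fun k => (measurableSet_Q q k).inter (hE.preimage (measurable_sh k))

/-- Decomposition of an "eventually `Q`, then `E`" event into disjoint path-cylinders. -/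
lemma QE_eq_iUnion (q : PrefixPred S) (E : Set (ℕ → S)) :
    {ω : ℕ → S | ∃ k, q.Q k ω ∧ sh k ω ∈ E}
      = ⋃ (i : Σ k : ℕ, {x : Fin (k+1) → S // q.Q k (ext' x)}),
          (pc i.1 (ext' i.2.1) ∩ (sh i.1) ⁻¹' E) := by
  ext ω
  simp only [mem_setOf_eq, mem_iUnion, mem_inter_iff, mem_preimage]
  constructor
  · rintro ⟨k, hq, hE⟩
    refine ⟨⟨k, ⟨proj k ω, q.dep k ω _ (fun i hi => (ext'_proj ω i hi).symm) hq⟩⟩, ?_, hE⟩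
    intro i hi
    exact (ext'_proj ω i hi).symm
  · rintro ⟨⟨k, x, hx⟩, hpc, hE⟩
    exact ⟨k, q.dep k _ ω (fun i hi => (hpc i hi).symm) hx, hE⟩

/-- The master comparison lemma: if from every state reached at the "decision time" the
continuation into `E` is at most `c` times the continuation into `F`, then the same holds
for the global events. -/
lemma markov_union (hP : IsMarkovMeasureFamily κ P) {μ : Measure S}
    (hμ : IsProbabilityMeasure μ) (q : PrefixPred S)
    {E F : Set (ℕ → S)} (hE : MeasurableSet E) (hF : MeasurableSet F) (c : ℝ≥0∞)
    (hcomp : ∀ k (x : ℕ → S), q.Q k x →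
      P (Measure.dirac (x k)) E ≤ c * P (Measure.dirac (x k)) F) :
    P μ {ω : ℕ → S | ∃ k, q.Q k ω ∧ sh k ω ∈ E}
      ≤ c * P μ {ω : ℕ → S | ∃ k, q.Q k ω ∧ sh k ω ∈ F} := by
  have hdisj : ∀ G : Set (ℕ → S), Pairwise (Function.onFun Disjoint
      (fun i : Σ k : ℕ, {x : Fin (k+1) → S // q.Q k (ext' x)} =>
        pc i.1 (ext' i.2.1) ∩ (sh i.1) ⁻¹' G)) := by
    intro G i j hij
    simp only [Function.onFun]
    rw [Set.disjoint_left]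
    rintro ω ⟨hpci, -⟩ ⟨hpcj, -⟩
    apply hij
    obtain ⟨k, x, hx⟩ := i
    obtain ⟨k', x', hx'⟩ := j
    have hqi : q.Q k ω := q.dep k _ ω (fun i hi => (hpci i hi).symm) hx
    have hqj : q.Q k' ω := q.dep k' _ ω (fun i hi => (hpcj i hi).symm) hx'
    have hkk : k = k' := q.excl ω k k' hqi hqj
    subst hkk
    have hxx : x = x' := by
      ext i
      have h1 := hpci i.1 (Nat.lt_succ_iff.mp i.2)
      have h2 := hpcj i.1 (Nat.lt_succ_iff.mp i.2)
      have e1 : ext' x i.1 = x i := by simp [ext', i.2]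
      have e2 : ext' x' i.1 = x' i := by simp [ext', i.2]
      rw [← e1, ← h1, h2, e2]
    simp [hxx]
  have hmeas : ∀ (G : Set (ℕ → S)), MeasurableSet G →
      ∀ i : Σ k : ℕ, {x : Fin (k+1) → S // q.Q k (ext' x)},
      MeasurableSet (pc i.1 (ext' i.2.1) ∩ (sh i.1) ⁻¹' G) := fun G hG i =>
    (measurableSet_pc i.1 _).inter (hG.preimage (measurable_sh i.1))
  rw [QE_eq_iUnion q E, QE_eq_iUnion q F,
    measure_iUnion (hdisj E) (hmeas E hE), measure_iUnion (hdisj F) (hmeas F hF),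
    ← ENNReal.tsum_mul_left]
  apply ENNReal.tsum_le_tsum
  rintro ⟨k, x, hx⟩
  rw [markov κ P hP hμ k _ hE, markov κ P hP hμ k _ hF]
  calc wt κ μ k (ext' x) * P (Measure.dirac (ext' x k)) E
      ≤ wt κ μ k (ext' x) * (c * P (Measure.dirac (ext' x k)) F) := by
        exact mul_le_mul_right (hcomp k (ext' x) hx) _
    _ = c * (wt κ μ k (ext' x) * P (Measure.dirac (ext' x k)) F) := by ring

lemma QE_univ (q : PrefixPred S) :
    {ω : ℕ → S | ∃ k, q.Q k ω ∧ sh k ω ∈ (univ : Set (ℕ → S))} = {ω | ∃ k, q.Q k ω} := by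
  simp

end Master

section Counting
variable {S : Type*}

open Classical in
/-- number of visits to `X` among `ω 0, ..., ω k` -/
noncomputable def cnt (X : Set S) (ω : ℕ → S) : ℕ → ℕ
  | 0 => if ω 0 ∈ X then 1 else 0
  | k+1 => cnt X ω k + if ω (k+1) ∈ X then 1 else 0

lemma cnt_mono (X : Set S) (ω : ℕ → S) {k k' : ℕ} (h : k ≤ k') : cnt X ω k ≤ cnt X ω k' := by
  induction k' with
  | zero => simp_all
  | succ n ih =>
      rcases Nat.lt_succ_iff_lt_or_eq.mp (Nat.lt_succ_of_le h) with h' | h'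
      · exact le_trans (ih (by omega)) (Nat.le_add_right _ _)
      · subst h'; rfl

lemma cnt_le (X : Set S) (ω : ℕ → S) (k : ℕ) : cnt X ω k ≤ k + 1 := by
  induction k with
  | zero => simp [cnt]; split <;> omega
  | succ n ih => simp only [cnt]; split <;> omega

lemma cnt_congr (X : Set S) {ω ω' : ℕ → S} {k : ℕ} (h : ∀ i ≤ k, ω i = ω' i) :
    cnt X ω k = cnt X ω' k := by
  induction k with
  | zero => simp only [cnt]; rw [h 0 le_rfl]
  | succ n ih =>
      simp only [cnt]
      rw [h (n+1) le_rfl, ih (fun i hi => h i (by omega))]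

lemma cnt_pos {X : Set S} {ω : ℕ → S} {k : ℕ} (h : ω k ∈ X) : 1 ≤ cnt X ω k := by
  cases k with
  | zero => simp [cnt, h]
  | succ n => simp only [cnt, if_pos h]; omega

lemma cnt_lt_of_mem {X : Set S} {ω : ℕ → S} {k k' : ℕ} (hkk : k < k') (h : ω k' ∈ X) :
    cnt X ω k < cnt X ω k' := by
  cases k' with
  | zero => omega
  | succ n =>
      calc cnt X ω k ≤ cnt X ω n := cnt_mono X ω (by omega)
        _ < cnt X ω (n+1) := by simp only [cnt, if_pos h]; omega

lemma exists_exact_visit {X : Set S} {ω : ℕ → S} {m K : ℕ} (h1 : 1 ≤ m)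
    (h2 : m ≤ cnt X ω K) : ∃ k ≤ K, ω k ∈ X ∧ cnt X ω k = m := by
  induction K with
  | zero =>
      have := cnt_le X ω 0
      refine ⟨0, le_rfl, ?_, by omega⟩
      by_contra hmem
      simp [cnt, hmem] at h2; omega
  | succ n ih =>
      by_cases hn : m ≤ cnt X ω n
      · obtain ⟨k, hk, h⟩ := ih hn
        exact ⟨k, by omega, h⟩
      · by_cases hmem : ω (n+1) ∈ X
        · refine ⟨n+1, le_rfl, hmem, ?_⟩
          simp only [cnt, if_pos hmem] at h2 ⊢
          omega
        · simp only [cnt, if_neg hmem] at h2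
          omega

end Counting

section VisitPred
variable {S : Type*} [Countable S] [MeasurableSpace S] [DiscreteMeasurableSpace S]

/-- the `(m+1)`-st visit to `X` happens at time `k`, with no visit to `B` up to time `k` -/
def vq (X B : Set S) (m : ℕ) : PrefixPred S where
  Q := fun k ω => (∀ j ≤ k, ω j ∉ B) ∧ ω k ∈ X ∧ cnt X ω k = m + 1
  dep := by
    intro k ω ω' h ⟨h1, h2, h3⟩
    exact ⟨fun j hj => (h j hj) ▸ h1 j hj, (h k le_rfl) ▸ h2,
      (cnt_congr X (fun i hi => (h i hi).symm)) ▸ h3⟩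
  excl := by
    intro ω k k' ⟨_, h2, h3⟩ ⟨_, h2', h3'⟩
    by_contra hne
    rcases Nat.lt_or_ge k k' with h | h
    · have := cnt_lt_of_mem h h2'; omega
    · have := cnt_lt_of_mem (by omega : k' < k) h2; omega

/-- return to `X` avoiding `B` strictly after time `0` -/
def ret (X B : Set S) : Set (ℕ → S) :=
  {σ : ℕ → S | ∃ j, 1 ≤ j ∧ σ j ∈ X ∧ ∀ i, 1 ≤ i → i ≤ j → σ i ∉ B}

lemma measurableSet_ret (X B : Set S) : MeasurableSet (ret (S := S) X B) := by
  have : ret (S := S) X B = ⋃ j, ⋃ (_ : 1 ≤ j),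
      ((fun ω : ℕ → S => ω j) ⁻¹' X ∩ ⋂ i, ⋂ (_ : 1 ≤ i), ⋂ (_ : i ≤ j),
        (fun ω : ℕ → S => ω i) ⁻¹' Bᶜ) := by
    ext ω; simp only [ret, mem_setOf_eq, mem_iUnion, mem_inter_iff, mem_preimage, mem_iInter,
      mem_compl_iff]; tauto
  rw [this]
  refine MeasurableSet.iUnion fun j => MeasurableSet.iUnion fun _ =>
    MeasurableSet.inter ((measurable_pi_apply j) .of_discrete) ?_
  exact MeasurableSet.iInter fun i => MeasurableSet.iInter fun _ => MeasurableSet.iInter fun _ =>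
    (measurable_pi_apply i) .of_discrete

/-- existence of an exact `(m+1)`-st visit -/
lemma exists_vq {X B : Set S} {ω : ℕ → S} {m K : ℕ}
    (hB : ∀ j ≤ K, ω j ∉ B) (h : m + 1 ≤ cnt X ω K) : ∃ k, (vq X B m).Q k ω := by
  obtain ⟨k, hk, hmem, hcnt⟩ := exists_exact_visit (by omega) h
  exact ⟨k, fun j hj => hB j (by omega), hmem, hcnt⟩

/-- the step identity: the `(m+2)`-nd clean visit happens iff after the `(m+1)`-st clean visit
there is a clean return -/
lemma vq_step (X B : Set S) (m : ℕ) :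
    {ω : ℕ → S | ∃ k, (vq X B (m+1)).Q k ω}
      = {ω : ℕ → S | ∃ k, (vq X B m).Q k ω ∧ sh k ω ∈ ret X B} := by
  ext ω
  simp only [mem_setOf_eq, vq]
  constructor
  · rintro ⟨k', hB', hmem', hcnt'⟩
    obtain ⟨k, hk, hmem, hcnt⟩ :=
      exists_exact_visit (X := X) (ω := ω) (m := m+1) (K := k') (by omega) (by omega)
    have hkk : k < k' := by
      rcases Nat.lt_trichotomy k k' with h | h | h
      · exact h
      · subst h; omega
      · have := cnt_mono X ω (le_of_lt h); omega
    refine ⟨k, ⟨fun j hj => hB' j (by omega), hmem, hcnt⟩, k' - k, by omega, ?_, ?_⟩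
    · show ω (k + (k' - k)) ∈ X
      rw [show k + (k' - k) = k' by omega]; exact hmem'
    · intro i h1 h2
      show ω (k + i) ∉ B
      exact hB' (k + i) (by omega)
  · rintro ⟨k, ⟨hB, hmem, hcnt⟩, j, hj1, hjmem, hjB⟩
    simp only [sh] at hjmem hjB
    have hcnt2 : m + 2 ≤ cnt X ω (k + j) := by
      have := cnt_lt_of_mem (show k < k + j by omega) hjmem
      omega
    obtain ⟨k', hk', hmem', hcnt'⟩ := exists_exact_visit (m := m+2) (by omega) hcnt2
    have hkk : k < k' := by
      by_contra h
      have := cnt_mono X ω (show k' ≤ k by omega)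
      omega
    refine ⟨k', fun i hi => ?_, hmem', by omega⟩
    by_cases hik : i ≤ k
    · exact hB i hik
    · have := hjB (i - k) (by omega) (by omega)
      rwa [show k + (i - k) = i by omega] at this

end VisitPred

section MainLemmas
variable {S : Type*} [Countable S] [MeasurableSpace S] [DiscreteMeasurableSpace S]
variable (κ : Kernel S S) [IsMarkovKernel κ]
variable (P : Measure S → Measure (ℕ → S))

lemma measurableSet_QEx (q : PrefixPred S) : MeasurableSet {ω : ℕ → S | ∃ k, q.Q k ω} := by
  rw [← QE_univ q]
  exact measurableSet_QE q MeasurableSet.univ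

lemma measurableSet_FEv (X : Set S) : MeasurableSet (FEv (S := S) X) := by
  have : FEv (S := S) X = ⋃ k, (fun ω : ℕ → S => ω k) ⁻¹' X := by
    ext ω; simp [FEv]
  rw [this]
  exact MeasurableSet.iUnion fun k => (measurable_pi_apply k) .of_discrete

lemma measurableSet_never (X : Set S) : MeasurableSet {ω : ℕ → S | ∀ k, ω k ∉ X} := by
  have : {ω : ℕ → S | ∀ k, ω k ∉ X} = ⋂ k, (fun ω : ℕ → S => ω k) ⁻¹' Xᶜ := by
    ext ω; simp
  rw [this]
  exact MeasurableSet.iInter fun k => (measurable_pi_apply k) .of_discrete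

lemma P_coord_zero (hP : IsMarkovMeasureFamily κ P) (t : S) (X : Set S) :
    P (Measure.dirac t) {ω : ℕ → S | ω 0 ∈ X} = Measure.dirac t X := by
  have h : {ω : ℕ → S | ω 0 ∈ X} = (proj (S := S) 0) ⁻¹' {y : Fin 1 → S | y 0 ∈ X} := by
    ext ω; simp [proj]
  rw [h, P_cyl κ P hP (by infer_instance), finDist,
    Measure.map_apply (measurable_of_countable _) .of_discrete]
  congr 1

lemma tsum_kernel (t : S) : ∑' u : S, κ t {u} = 1 := by
  have h : (univ : Set S) = ⋃ u : S, {u} := (Set.iUnion_of_singleton S).symm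
  have := measure_iUnion (μ := κ t) (fun a b hab => by simpa using hab)
    (fun u : S => MeasurableSet.of_discrete (s := {u}))
  rw [← this, ← h, measure_univ]

lemma P_shift_one (hP : IsMarkovMeasureFamily κ P) (t : S) {E : Set (ℕ → S)}
    (hE : MeasurableSet E) (hall : ∀ u, P (Measure.dirac u) E = 1) :
    P (Measure.dirac t) ((sh 1) ⁻¹' E) = 1 := by
  haveI := (hP (Measure.dirac t) (by infer_instance)).1
  apply le_antisymm prob_le_one
  set two : S → ℕ → S := fun u i => if i = 0 then t else u with htwo
  have h1 : ∀ u : S, P (Measure.dirac t) (pc 1 (two u) ∩ (sh 1) ⁻¹' E) = κ t {u} := by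
    intro u
    rw [markov κ P hP (by infer_instance) 1 (two u) hE]
    have hw : wt κ (Measure.dirac t) 1 (two u) = κ t {u} := by
      show Measure.dirac t {two u 0} * κ (two u 0) {two u 1} = κ t {u}
      simp [htwo, Measure.dirac_apply' _ (MeasurableSet.of_discrete)]
    have h2 : two u 1 = u := by simp [htwo]
    rw [hw, h2, hall u, mul_one]
  have hdisj : Pairwise (Function.onFun Disjoint
      (fun u : S => pc 1 (two u) ∩ (sh 1) ⁻¹' E)) := by
    intro u u' huu
    simp only [Function.onFun]
    rw [Set.disjoint_left]
    rintro ω ⟨h1', -⟩ ⟨h2', -⟩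
    apply huu
    have e1 := h1' 1 le_rfl
    have e2 := h2' 1 le_rfl
    simp only [htwo, if_neg one_ne_zero] at e1 e2
    rw [← e1, ← e2]
  have hmeas : ∀ u : S, MeasurableSet (pc 1 (two u) ∩ (sh 1) ⁻¹' E) := fun u =>
    (measurableSet_pc 1 _).inter (hE.preimage (measurable_sh 1))
  have hsub : (⋃ u : S, pc 1 (two u) ∩ (sh 1) ⁻¹' E) ⊆ (sh 1) ⁻¹' E := by
    intro ω hω
    obtain ⟨u, -, h⟩ := mem_iUnion.mp hω
    exact h
  calc (1 : ℝ≥0∞) = ∑' u : S, κ t {u} := (tsum_kernel κ t).symm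
    _ = P (Measure.dirac t) (⋃ u : S, pc 1 (two u) ∩ (sh 1) ⁻¹' E) := by
        rw [measure_iUnion hdisj hmeas]
        exact (tsum_congr h1).symm
    _ ≤ P (Measure.dirac t) ((sh 1) ⁻¹' E) := measure_mono hsub

lemma ret_empty_eq (X : Set S) : ret (S := S) X ∅ = (sh 1) ⁻¹' (FEv X) := by
  ext σ
  simp only [ret, mem_setOf_eq, mem_preimage, FEv, sh]
  constructor
  · rintro ⟨j, hj1, hjm, -⟩
    exact ⟨j - 1, by rwa [show 1 + (j - 1) = j by omega]⟩
  · rintro ⟨j, hj⟩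
    exact ⟨1 + j, by omega, hj, fun i _ _ => notMem_empty _⟩

lemma P_ret_attractor (hP : IsMarkovMeasureFamily κ P) {A : Set S}
    (hattr : IsAttractor P A) (t : S) : P (Measure.dirac t) (ret A ∅) = 1 := by
  rw [ret_empty_eq]
  exact P_shift_one κ P hP t (measurableSet_FEv A)
    (fun u => hattr (Measure.dirac u) (by infer_instance))

lemma att_iter (hP : IsMarkovMeasureFamily κ P) {A : Set S} (hattr : IsAttractor P A)
    {μ : Measure S} (hμ : IsProbabilityMeasure μ) (m : ℕ) :
    P μ {ω : ℕ → S | ∃ k, (vq A ∅ m).Q k ω} = 1 := by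
  haveI := (hP μ hμ).1
  induction m with
  | zero =>
      apply le_antisymm prob_le_one
      calc (1 : ℝ≥0∞) = P μ (FEv A) := (hattr μ hμ).symm
        _ ≤ P μ {ω : ℕ → S | ∃ k, (vq A ∅ 0).Q k ω} := by
            apply measure_mono
            rintro ω ⟨k, hk⟩
            exact exists_vq (fun j _ => notMem_empty _) (cnt_pos hk)
  | succ m ih =>
      apply le_antisymm prob_le_one
      have h1 := markov_union κ P hP hμ (vq A ∅ m) MeasurableSet.univ
        (measurableSet_ret A ∅) 1 (fun k x hx => by
          haveI := (hP (Measure.dirac (x k)) (by infer_instance)).1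
          rw [measure_univ, one_mul, P_ret_attractor κ P hP hattr])
      rw [QE_univ, one_mul] at h1
      calc (1 : ℝ≥0∞) = P μ {ω : ℕ → S | ∃ k, (vq A ∅ m).Q k ω} := ih.symm
        _ ≤ P μ {ω : ℕ → S | ∃ k, (vq A ∅ m).Q k ω ∧ sh k ω ∈ ret A ∅} := h1
        _ = P μ {ω : ℕ → S | ∃ k, (vq A ∅ (m+1)).Q k ω} := by rw [vq_step]

lemma inter_ae_one {μ : Measure (ℕ → S)} [IsProbabilityMeasure μ] {G : ℕ → Set (ℕ → S)}
    (hm : ∀ m, MeasurableSet (G m)) (h1 : ∀ m, μ (G m) = 1) : μ (⋂ m, G m) = 1 := by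
  have h0 : μ ((⋂ m, G m)ᶜ) = 0 := by
    rw [compl_iInter]
    exact measure_iUnion_null fun m => by
      rw [measure_compl (hm m) (measure_ne_top _ _), h1 m, measure_univ, tsub_self]
  have h2 := measure_compl (MeasurableSet.iInter hm) (measure_ne_top μ (⋂ m, G m))
  rw [h0, measure_univ] at h2
  exact le_antisymm prob_le_one (tsub_eq_zero_iff_le.mp h2.symm)

/-- Key lemma: if `s ∉ B` is not in the avoid set of `B`, then almost no run visits `s`
infinitely often while avoiding `B` forever. -/
lemma io_never_null (hP : IsMarkovMeasureFamily κ P) {B : Set S} {s : S} (hsB : s ∉ B)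
    (hsav : P (Measure.dirac s) (FEv B) ≠ 0) {μ : Measure S} (hμ : IsProbabilityMeasure μ) :
    P μ ({ω : ℕ → S | ∀ n, ∃ k ≥ n, ω k = s} ∩ {ω : ℕ → S | ∀ k, ω k ∉ B}) = 0 := by
  haveI := (hP μ hμ).1
  haveI := (hP (Measure.dirac s) (by infer_instance)).1
  set ρ := P (Measure.dirac s) (ret {s} B) with hρdef
  have hsub : ∀ m, ({ω : ℕ → S | ∀ n, ∃ k ≥ n, ω k = s} ∩ {ω : ℕ → S | ∀ k, ω k ∉ B})
      ⊆ {ω : ℕ → S | ∃ k, (vq {s} B m).Q k ω} := by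
    intro m ω hω
    obtain ⟨hio, hnb⟩ := hω
    have hcnt : ∀ m', ∃ K, m' + 1 ≤ cnt ({s} : Set S) ω K := by
      intro m'
      induction m' with
      | zero =>
          obtain ⟨k, -, hk⟩ := hio 0
          exact ⟨k, cnt_pos (by simp [hk])⟩
      | succ n ih =>
          obtain ⟨K, hK⟩ := ih
          obtain ⟨k, hk1, hk2⟩ := hio (K + 1)
          have := cnt_lt_of_mem (show K < k by omega)
            (show ω k ∈ ({s} : Set S) by simp [hk2])
          exact ⟨k, by omega⟩
    obtain ⟨K, hK⟩ := hcnt m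
    exact exists_vq (fun j _ => hnb j) hK
  have hstep : ∀ m, P μ {ω : ℕ → S | ∃ k, (vq {s} B (m+1)).Q k ω}
      ≤ ρ * P μ {ω : ℕ → S | ∃ k, (vq {s} B m).Q k ω} := by
    intro m
    have h1 := markov_union κ P hP hμ (vq {s} B m) (measurableSet_ret {s} B)
      MeasurableSet.univ ρ (fun k x hx => by
        haveI := (hP (Measure.dirac (x k)) (by infer_instance)).1
        rw [mem_singleton_iff.mp hx.2.1, measure_univ, mul_one])
    rw [QE_univ] at h1
    calc P μ {ω : ℕ → S | ∃ k, (vq {s} B (m+1)).Q k ω}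
        = P μ {ω : ℕ → S | ∃ k, (vq {s} B m).Q k ω ∧ sh k ω ∈ ret {s} B} := by rw [vq_step]
      _ ≤ ρ * P μ {ω : ℕ → S | ∃ k, (vq {s} B m).Q k ω} := h1
  by_cases hρ1 : ρ < 1
  · have hgle : ∀ m, P μ {ω : ℕ → S | ∃ k, (vq {s} B m).Q k ω} ≤ ρ ^ m := by
      intro m
      induction m with
      | zero => simpa using prob_le_one
      | succ n ih =>
          calc P μ {ω : ℕ → S | ∃ k, (vq {s} B (n+1)).Q k ω}
              ≤ ρ * P μ {ω : ℕ → S | ∃ k, (vq {s} B n).Q k ω} := hstep n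
            _ ≤ ρ * ρ ^ n := mul_le_mul_right ih ρ
            _ = ρ ^ (n+1) := by rw [pow_succ, mul_comm]
    have hlim : Tendsto (fun m : ℕ => ρ ^ m) atTop (nhds 0) :=
      ENNReal.tendsto_pow_atTop_nhds_zero_of_lt_one hρ1
    refine le_antisymm (ge_of_tendsto' hlim fun m => ?_) (zero_le)
    exact le_trans (measure_mono (hsub m)) (hgle m)
  · exfalso
    have hρeq : ρ = 1 := le_antisymm prob_le_one (not_lt.mp hρ1)
    have hgm : ∀ m, P (Measure.dirac s) {ω : ℕ → S | ∃ k, (vq {s} B m).Q k ω} = 1 := by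
      intro m
      induction m with
      | zero =>
          apply le_antisymm prob_le_one
          calc (1 : ℝ≥0∞) = Measure.dirac s ({s} : Set S) := by
                simp [Measure.dirac_apply' _ (MeasurableSet.of_discrete)]
            _ = P (Measure.dirac s) {ω : ℕ → S | ω 0 ∈ ({s} : Set S)} :=
                (P_coord_zero κ P hP s {s}).symm
            _ ≤ P (Measure.dirac s) {ω : ℕ → S | ∃ k, (vq {s} B 0).Q k ω} := by
                apply measure_mono
                intro ω h0
                have h0' : ω 0 = s := mem_singleton_iff.mp h0
                refine ⟨0, fun j hj => ?_, h0, by simp [cnt, h0']⟩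
                have hj0 : j = 0 := Nat.le_zero.mp hj
                rw [hj0, h0']
                exact hsB
      | succ n ih =>
          apply le_antisymm prob_le_one
          have h1 := markov_union κ P hP (μ := Measure.dirac s) (by infer_instance) (vq {s} B n)
            MeasurableSet.univ (measurableSet_ret {s} B) 1 (fun k x hx => by
              haveI := (hP (Measure.dirac (x k)) (by infer_instance)).1
              rw [mem_singleton_iff.mp hx.2.1, measure_univ, one_mul, ← hρdef, hρeq])
          rw [QE_univ, one_mul] at h1
          calc (1 : ℝ≥0∞) = P (Measure.dirac s) {ω : ℕ → S | ∃ k, (vq {s} B n).Q k ω} := ih.symm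
            _ ≤ P (Measure.dirac s)
                {ω : ℕ → S | ∃ k, (vq {s} B n).Q k ω ∧ sh k ω ∈ ret {s} B} := h1
            _ = P (Measure.dirac s) {ω : ℕ → S | ∃ k, (vq {s} B (n+1)).Q k ω} := by
                rw [vq_step]
    have hnb : ∀ m, P (Measure.dirac s) {ω : ℕ → S | ∀ j ≤ m, ω j ∉ B} = 1 := by
      intro m
      apply le_antisymm prob_le_one
      rw [← hgm m]
      apply measure_mono
      rintro ω ⟨k, hBk, hmem, hcnt⟩ 
      intro j hj
      apply hBk
      have := cnt_le ({s} : Set S) ω k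
      omega
    have hnever : P (Measure.dirac s) {ω : ℕ → S | ∀ k, ω k ∉ B} = 1 := by
      have heq : {ω : ℕ → S | ∀ k, ω k ∉ B} = ⋂ m, {ω : ℕ → S | ∀ j ≤ m, ω j ∉ B} := by
        ext ω
        simp only [mem_setOf_eq, mem_iInter]
        exact ⟨fun h m j _ => h j, fun h k => h k k le_rfl⟩
      rw [heq]
      refine inter_ae_one (fun m => ?_) hnb
      have : {ω : ℕ → S | ∀ j ≤ m, ω j ∉ B} = ⋂ j, ⋂ (_ : j ≤ m),
          (fun ω : ℕ → S => ω j) ⁻¹' Bᶜ := by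
        ext ω; simp
      rw [this]
      exact MeasurableSet.iInter fun j => MeasurableSet.iInter fun _ =>
        (measurable_pi_apply j) .of_discrete
    apply hsav
    have hFeq : FEv B = {ω : ℕ → S | ∀ k, ω k ∉ B}ᶜ := by
      ext ω; simp [FEv]
    rw [hFeq, measure_compl (measurableSet_never B) (measure_ne_top _ _), hnever,
      measure_univ, tsub_self]

end MainLemmas



/-- A countable Markov chain (countable state space with the discrete
σ-algebra) that has a finite attractor is decisive w.r.t. every set of states. -/
theorem decisive_of_finite_attractor
    {S : Type*} [Countable S] [MeasurableSpace S] [DiscreteMeasurableSpace S]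
    (κ : Kernel S S) [IsMarkovKernel κ]
    (P : Measure S → Measure (ℕ → S)) (hP : IsMarkovMeasureFamily κ P)
    (A : Set S) (hAfin : A.Finite) (hattr : IsAttractor P A) :
    ∀ B : Set S, Decisive P B := by
  intro B μ hμ
  haveI := (hP μ hμ).1
  set Bt := avoidSet P B with hBtdef
  set NB : Set (ℕ → S) := {ω : ℕ → S | ∀ k, ω k ∉ B} with hNB
  set NBt : Set (ℕ → S) := {ω : ℕ → S | ∀ k, ω k ∉ Bt} with hNBt
  have hNnull : P μ (NB ∩ NBt) = 0 := by
    refine le_antisymm ?_ (zero_le)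
    have hIOc : P μ ((⋂ m, {ω : ℕ → S | ∃ k, (vq A ∅ m).Q k ω})ᶜ) = 0 := by
      rw [compl_iInter]
      refine measure_iUnion_null fun m => ?_
      rw [measure_compl (measurableSet_QEx (vq A ∅ m)) (measure_ne_top _ _),
        att_iter κ P hP hattr hμ m, measure_univ, tsub_self]
    have hone : ∀ s ∈ A,
        P μ ({ω : ℕ → S | ∀ n, ∃ k ≥ n, ω k = s} ∩ (NB ∩ NBt)) = 0 := by
      intro s hs
      by_cases hsB : s ∈ B
      · have hempty : {ω : ℕ → S | ∀ n, ∃ k ≥ n, ω k = s} ∩ (NB ∩ NBt) ⊆ ∅ := by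
          rintro ω ⟨hio, hnB, -⟩
          obtain ⟨k, -, hk⟩ := hio 0
          exact (hnB k (by rw [hk]; exact hsB)).elim
        exact measure_mono_null hempty measure_empty
      · by_cases hsBt : s ∈ Bt
        · have hempty : {ω : ℕ → S | ∀ n, ∃ k ≥ n, ω k = s} ∩ (NB ∩ NBt) ⊆ ∅ := by
            rintro ω ⟨hio, -, hnBt⟩
            obtain ⟨k, -, hk⟩ := hio 0
            exact (hnBt k (by rw [hk]; exact hsBt)).elim
          exact measure_mono_null hempty measure_empty
        · have hsav : P (Measure.dirac s) (FEv B) ≠ 0 := hsBt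
          exact measure_mono_null
            (Set.inter_subset_inter (subset_refl _) inter_subset_left)
            (io_never_null κ P hP hsB hsav hμ)
    have hsubset : NB ∩ NBt
        ⊆ ((⋂ m, {ω : ℕ → S | ∃ k, (vq A ∅ m).Q k ω})ᶜ)
          ∪ ⋃ s ∈ A, ({ω : ℕ → S | ∀ n, ∃ k ≥ n, ω k = s} ∩ (NB ∩ NBt)) := by
      intro ω hω
      by_cases hio : ω ∈ ⋂ m, {ω : ℕ → S | ∃ k, (vq A ∅ m).Q k ω}
      · right
        simp only [mem_iInter, mem_setOf_eq] at hio
        have hvis : ∀ n, ∃ k ≥ n, ω k ∈ A := by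
          intro n
          obtain ⟨k, hBk, hmem, hcnt⟩ := hio (n+1)
          have := cnt_le A ω k
          exact ⟨k, by omega, hmem⟩
        have hex : ∃ s ∈ A, ∀ n, ∃ k ≥ n, ω k = s := by
          by_contra hcon
          push_neg at hcon
          classical
          set f : S → ℕ := fun u => if h : ∃ n, ∀ k, k ≥ n → ω k ≠ u then h.choose else 0
            with hf
          set N := hAfin.toFinset.sup f with hN
          have hbound : ∀ s ∈ A, ∀ k', k' ≥ f s → ω k' ≠ s := by
            intro s hsa k' hk'
            obtain ⟨n0, hn0⟩ := hcon s hsa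
            have hex' : ∃ n, ∀ k'', k'' ≥ n → ω k'' ≠ s := ⟨n0, fun k'' h => hn0 k'' h⟩
            have hfeq : f s = hex'.choose := by rw [hf]; exact dif_pos hex'
            exact hex'.choose_spec k' (hfeq ▸ hk')
          obtain ⟨k, hk, hmem⟩ := hvis (N + 1)
          have hsA : ω k ∈ hAfin.toFinset := hAfin.mem_toFinset.mpr hmem
          have hle : f (ω k) ≤ N := Finset.le_sup hsA
          exact hbound (ω k) hmem k (by omega) rfl
        obtain ⟨s, hsa, hios⟩ := hex
        exact mem_biUnion hsa ⟨hios, hω⟩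
      · left; exact hio
    calc P μ (NB ∩ NBt)
        ≤ P μ (((⋂ m, {ω : ℕ → S | ∃ k, (vq A ∅ m).Q k ω})ᶜ)
            ∪ ⋃ s ∈ A, ({ω : ℕ → S | ∀ n, ∃ k ≥ n, ω k = s} ∩ (NB ∩ NBt))) :=
          measure_mono hsubset
      _ ≤ P μ ((⋂ m, {ω : ℕ → S | ∃ k, (vq A ∅ m).Q k ω})ᶜ)
            + P μ (⋃ s ∈ A, ({ω : ℕ → S | ∀ n, ∃ k ≥ n, ω k = s} ∩ (NB ∩ NBt))) :=
          measure_union_le _ _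
      _ = 0 := by
          rw [hIOc, (measure_biUnion_null_iff hAfin.countable).mpr hone]
          simp
  have hun : MeasurableSet (FEv B ∪ FEv Bt) :=
    (measurableSet_FEv B).union (measurableSet_FEv Bt)
  have hcompl : P μ ((FEv B ∪ FEv Bt)ᶜ) = 0 := by
    have heq : (FEv B ∪ FEv Bt)ᶜ = NB ∩ NBt := by
      ext ω
      simp [FEv, hNB, hNBt, not_or]
    rw [heq]
    exact hNnull
  have h2 := measure_compl hun (measure_ne_top (P μ) _)
  rw [hcompl, measure_univ] at h2
  exact le_antisymm prob_le_one (tsub_eq_zero_iff_le.mp h2.symm)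

end STS
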